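/- For finite-dimensional Lie algebras L₁ and L₂, the exterior square satisfies (L₁ ⊕ L₂) ∧ (L₁ ⊕ L₂) ≅ (L₁ ∧ L₁) ⊕ (L₂ ∧ L₂) ⊕ (L₁/L₁² ⊗ L₂/L₂²). -/

import Mathlib

open Module Function

universe u v

/-! ### Product of Lie algebras -/

section ProdLie

variable (k : Type) [Field k]
variable (L₁ : Type*) (L₂ : Type*) [LieRing L₁] [LieRing L₂]

instance Prod.instLieRing : LieRing (L₁ × L₂) where
  bracket x y := (⁅x.1, y.1⁆, ⁅x.2, y.2⁆)
  add_lie x y z := by ext <;> exact add_lie _ _ _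
  lie_add x y z := by ext <;> exact lie_add _ _ _
  lie_self x := by ext <;> exact lie_self _
  leibniz_lie x y z := by ext <;> exact leibniz_lie _ _ _

instance Prod.instLieAlgebra [LieAlgebra k L₁] [LieAlgebra k L₂] :
    LieAlgebra k (L₁ × L₂) where
  lie_smul c x y := by ext <;> exact lie_smul _ _ _

end ProdLie

section Defs

variable (k : Type) [Field k]
variable (L : Type u) [LieRing L] [LieAlgebra k L]

/-- The derived subalgebra `L² = ⁅L, L⁆` as a Lie ideal. -/
def derived : LieIdeal k L := ⁅(⊤ : LieIdeal k L), (⊤ : LieIdeal k L)⁆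

/-- A Lie algebra is capable if it is isomorphic to `H / Z(H)` for some Lie algebra `H`. -/
def IsCapable : Prop :=
  ∃ (H : Type u) (_ : LieRing H) (_ : LieAlgebra k H),
    Nonempty (L ≃ₗ⁅k⁆ H ⧸ LieAlgebra.center k H)

/-- A surjective Lie algebra morphism with central kernel. -/
def IsCentralExtension {E : Type u} [LieRing E] [LieAlgebra k E] (φ : E →ₗ⁅k⁆ L) : Prop :=
  Function.Surjective φ ∧ φ.ker ≤ LieAlgebra.center k E

/-- The epicenter `Z^*(L)`: the intersection of the images `φ(Z(E))` over all central
extensions `φ : E → L`. -/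
def epicenter : LieIdeal k L :=
  sInf {I : LieIdeal k L |
    ∃ (E : Type u) (_ : LieRing E) (_ : LieAlgebra k E) (φ : E →ₗ⁅k⁆ L),
      IsCentralExtension k L φ ∧ (I : Set L) = φ '' (LieAlgebra.center k E)}

/-! ### The nonabelian exterior square -/

/-- The defining relations of the nonabelian exterior square of a Lie algebra. -/
def exteriorRels : Set (FreeLieAlgebra k (L × L)) :=
  {a | (∃ (x x' y : L), a = FreeLieAlgebra.of k (x + x', y) - FreeLieAlgebra.of k (x, y)
          - FreeLieAlgebra.of k (x', y)) ∨
       (∃ (x y y' : L), a = FreeLieAlgebra.of k (x, y + y') - FreeLieAlgebra.of k (x, y)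
          - FreeLieAlgebra.of k (x, y')) ∨
       (∃ (c : k) (x y : L), a = FreeLieAlgebra.of k (c • x, y) - c • FreeLieAlgebra.of k (x, y)) ∨
       (∃ (c : k) (x y : L), a = FreeLieAlgebra.of k (x, c • y) - c • FreeLieAlgebra.of k (x, y)) ∨
       (∃ (x x' y : L), a = FreeLieAlgebra.of k (⁅x, x'⁆, y) - FreeLieAlgebra.of k (x, ⁅x', y⁆)
          + FreeLieAlgebra.of k (x', ⁅x, y⁆)) ∨
       (∃ (x y y' : L), a = FreeLieAlgebra.of k (x, ⁅y, y'⁆) - FreeLieAlgebra.of k (⁅y', x⁆, y)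
          + FreeLieAlgebra.of k (⁅y, x⁆, y')) ∨
       (∃ (x y x' y' : L), a = ⁅FreeLieAlgebra.of k (x, y), FreeLieAlgebra.of k (x', y')⁆
          + FreeLieAlgebra.of k (⁅y, x⁆, ⁅x', y'⁆)) ∨
       (∃ (x : L), a = FreeLieAlgebra.of k (x, x))}

/-- The ideal of relations of the nonabelian exterior square. -/
noncomputable def exteriorIdeal : LieIdeal k (FreeLieAlgebra k (L × L)) :=
  LieSubmodule.lieSpan k _ (exteriorRels k L)

/-- The nonabelian exterior square `L ∧ L`. -/
abbrev ExteriorSquare := FreeLieAlgebra k (L × L) ⧸ exteriorIdeal k L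

variable {L} in
/-- The element `x ∧ y` of the nonabelian exterior square. -/
noncomputable def wedge (x y : L) : ExteriorSquare k L :=
  LieSubmodule.Quotient.mk' (exteriorIdeal k L) (FreeLieAlgebra.of k (x, y))

/-- The exterior center `Z^∧(L) = {x | x ∧ y = 0 for all y}`. -/
def exteriorCenter : Set L := {x | ∀ y : L, wedge k x y = 0}

end Defs

section Defs2

variable (k : Type) [Field k]
variable (L : Type u) [LieRing L] [LieAlgebra k L]

/-- The canonical free presentation `F(L) → L`. -/
noncomputable def pres : FreeLieAlgebra k L →ₗ⁅k⁆ L := FreeLieAlgebra.lift k id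

/-- The Schur multiplier computed from a presentation `ρ : F(L) → L'`,
namely `(ker ρ ∩ F²) / ⁅ker ρ, F⁆`. -/
abbrev multOf {L' : Type v} [LieRing L'] [LieAlgebra k L']
    (ρ : FreeLieAlgebra k L →ₗ⁅k⁆ L') : Type _ :=
  (ρ.ker ⊓ derived k (FreeLieAlgebra k L)).toSubmodule ⧸
    ((⁅ρ.ker, (⊤ : LieIdeal k (FreeLieAlgebra k L))⁆ :
        LieIdeal k (FreeLieAlgebra k L)).toSubmodule.comap
      (ρ.ker ⊓ derived k (FreeLieAlgebra k L)).toSubmodule.subtype)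

/-- The Schur multiplier `M(L) = (R ∩ F²)/⁅R, F⁆` for the canonical free
presentation `0 → R → F(L) → L → 0`. -/
noncomputable abbrev SchurMultiplier : Type _ := multOf k L (pres k L)

/-- The quotient map `L → L ⧸ N` as a morphism of Lie algebras. -/
def lieQuotMk (N : LieIdeal k L) : L →ₗ⁅k⁆ L ⧸ N :=
  { toLinearMap := (N : Submodule k L).mkQ
    map_lie' := rfl }

/-- The canonical presentation `F(L) → L ⧸ N` of a quotient of `L`. -/
noncomputable def presQ (N : LieIdeal k L) : FreeLieAlgebra k L →ₗ⁅k⁆ L ⧸ N :=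
  (lieQuotMk k L N).comp (pres k L)

end Defs2

section maps

variable (k : Type) [Field k]
variable (L : Type u) [LieRing L] [LieAlgebra k L]

lemma ker_le_kerQ (N : LieIdeal k L) : (pres k L).ker ≤ (presQ k L N).ker := by
  intro x hx
  rw [LieHom.mem_ker] at hx ⊢
  simp [presQ, LieHom.comp_apply, hx, lieQuotMk]

/-- The natural map `M(L) → M(L/N)` on Schur multipliers induced by a
(central) ideal `N` of `L`. -/
noncomputable def multMap (N : LieIdeal k L) :
    SchurMultiplier k L →ₗ[k] multOf k L (presQ k L N) :=
  Submodule.mapQ _ _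
    (Submodule.inclusion (by
      exact_mod_cast inf_le_inf_right (derived k (FreeLieAlgebra k L)) (ker_le_kerQ k L N)))
    (by
      intro x hx
      simp only [Submodule.mem_comap] at hx ⊢
      have hmono : (⁅(pres k L).ker, (⊤ : LieIdeal k (FreeLieAlgebra k L))⁆ :
          LieIdeal k (FreeLieAlgebra k L)) ≤
          ⁅(presQ k L N).ker, (⊤ : LieIdeal k (FreeLieAlgebra k L))⁆ :=
        LieSubmodule.mono_lie_left _ (ker_le_kerQ k L N)
      exact hmono hx)

end maps

section lift

variable {k : Type} [Field k]
variable {L : Type u} [LieRing L] [LieAlgebra k L]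
variable {L' : Type v} [LieRing L'] [LieAlgebra k L']

/-- Universal property of quotients of Lie algebras. -/
def lieQuotLift (I : LieIdeal k L) (f : L →ₗ⁅k⁆ L') (h : I ≤ f.ker) : (L ⧸ I) →ₗ⁅k⁆ L' :=
  { toLinearMap := (I : Submodule k L).liftQ f.toLinearMap (fun x hx => by
      have := h hx; rwa [LieHom.mem_ker] at this)
    map_lie' := by
      rintro ⟨x⟩ ⟨y⟩
      exact f.map_lie x y }

@[simp] lemma lieQuotLift_mk (I : LieIdeal k L) (f : L →ₗ⁅k⁆ L') (h : I ≤ f.ker) (x : L) :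
    lieQuotLift I f h (lieQuotMk k L I x) = f x := rfl

end lift

section extmaps

variable (k : Type) [Field k]
variable (L : Type u) [LieRing L] [LieAlgebra k L]

/-- `x ∧ y` rewritten via the quotient morphism. -/
lemma wedge_def (x y : L) :
    wedge k x y = lieQuotMk k _ (exteriorIdeal k L) (FreeLieAlgebra.of k (x, y)) := rfl

/-- The lift to the free Lie algebra of the map `(x, y) ↦ x ∧ y` valued in the
exterior square of a quotient of `L`. -/
noncomputable def extAux (N : LieIdeal k L) :
    FreeLieAlgebra k (L × L) →ₗ⁅k⁆ ExteriorSquare k (L ⧸ N) :=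
  FreeLieAlgebra.lift k fun p => wedge k (lieQuotMk k L N p.1) (lieQuotMk k L N p.2)

lemma wedge_mem_rel_zero {M : Type v} [LieRing M] [LieAlgebra k M]
    {a : FreeLieAlgebra k (M × M)} (ha : a ∈ exteriorRels k M) :
    lieQuotMk k _ (exteriorIdeal k M) a = 0 := by
  have h : a ∈ exteriorIdeal k M := LieSubmodule.subset_lieSpan ha
  show (exteriorIdeal k M : Submodule k (FreeLieAlgebra k (M × M))).mkQ a = 0
  rw [Submodule.mkQ_apply, Submodule.Quotient.mk_eq_zero]
  exact h

lemma extAux_rels (N : LieIdeal k L) : exteriorIdeal k L ≤ (extAux k L N).ker := by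
  rw [exteriorIdeal, LieSubmodule.lieSpan_le]
  intro a ha
  rw [SetLike.mem_coe, LieHom.mem_ker]
  set q := lieQuotMk k L N with hq
  have key : ∀ x y : L, extAux k L N (FreeLieAlgebra.of k (x, y)) =
      lieQuotMk k _ (exteriorIdeal k (L ⧸ N)) (FreeLieAlgebra.of k (q x, q y)) := by
    intro x y; rw [extAux, FreeLieAlgebra.lift_of_apply]; rfl
  obtain h|h|h|h|h|h|h|h := ha
  · obtain ⟨x, x', y, rfl⟩ := h
    simp only [map_sub, key]
    rw [← map_sub, ← map_sub]
    apply wedge_mem_rel_zero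
    exact Or.inl ⟨q x, q x', q y, by rw [map_add]⟩
  · obtain ⟨x, y, y', rfl⟩ := h
    simp only [map_sub, key]
    rw [← map_sub, ← map_sub]
    apply wedge_mem_rel_zero
    exact Or.inr (Or.inl ⟨q x, q y, q y', by rw [map_add]⟩)
  · obtain ⟨c, x, y, rfl⟩ := h
    simp only [map_sub, map_smul, key]
    rw [← map_smul (lieQuotMk k _ (exteriorIdeal k (L ⧸ N))) c
      (FreeLieAlgebra.of k (q x, q y)), ← map_sub]
    apply wedge_mem_rel_zero
    exact Or.inr (Or.inr (Or.inl ⟨c, q x, q y, rfl⟩))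
  · obtain ⟨c, x, y, rfl⟩ := h
    simp only [map_sub, map_smul, key]
    rw [← map_smul (lieQuotMk k _ (exteriorIdeal k (L ⧸ N))) c
      (FreeLieAlgebra.of k (q x, q y)), ← map_sub]
    apply wedge_mem_rel_zero
    exact Or.inr (Or.inr (Or.inr (Or.inl ⟨c, q x, q y, rfl⟩)))
  · obtain ⟨x, x', y, rfl⟩ := h
    simp only [map_sub, map_add, key]
    rw [← map_sub, ← map_add]
    apply wedge_mem_rel_zero
    refine Or.inr (Or.inr (Or.inr (Or.inr (Or.inl ⟨q x, q x', q y, ?_⟩))))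
    simp [LieHom.map_lie]
  · obtain ⟨x, y, y', rfl⟩ := h
    simp only [map_sub, map_add, key]
    rw [← map_sub, ← map_add]
    apply wedge_mem_rel_zero
    refine Or.inr (Or.inr (Or.inr (Or.inr (Or.inr (Or.inl ⟨q x, q y, q y', ?_⟩)))))
    simp [LieHom.map_lie]
  · obtain ⟨x, y, x', y', rfl⟩ := h
    simp only [map_add, LieHom.map_lie, key]
    rw [← LieHom.map_lie, ← map_add]
    apply wedge_mem_rel_zero
    refine Or.inr (Or.inr (Or.inr (Or.inr (Or.inr (Or.inr (Or.inl
      ⟨q x, q y, q x', q y', ?_⟩))))))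
    simp [LieHom.map_lie]
  · obtain ⟨x, rfl⟩ := h
    rw [key]
    apply wedge_mem_rel_zero
    exact Or.inr (Or.inr (Or.inr (Or.inr (Or.inr (Or.inr (Or.inr ⟨q x, rfl⟩))))))

/-- The natural morphism `L ∧ L → (L/N) ∧ (L/N)` of exterior squares. -/
noncomputable def extSqMap (N : LieIdeal k L) :
    ExteriorSquare k L →ₗ⁅k⁆ ExteriorSquare k (L ⧸ N) :=
  lieQuotLift (exteriorIdeal k L) (extAux k L N) (extAux_rels k L N)

/-- The commutator morphism `L ∧ L → L`, `x ∧ y ↦ ⁅x, y⁆`. -/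
noncomputable def commutatorMap : ExteriorSquare k L →ₗ⁅k⁆ L :=
  lieQuotLift (exteriorIdeal k L) (FreeLieAlgebra.lift k fun p : L × L => ⁅p.1, p.2⁆)
    (by
      rw [exteriorIdeal, LieSubmodule.lieSpan_le]
      intro a ha
      rw [SetLike.mem_coe, LieHom.mem_ker]
      obtain h|h|h|h|h|h|h|h := ha
      · obtain ⟨x, x', y, rfl⟩ := h
        simp [FreeLieAlgebra.lift_of_apply, add_lie]
      · obtain ⟨x, y, y', rfl⟩ := h
        simp [FreeLieAlgebra.lift_of_apply, lie_add]
      · obtain ⟨c, x, y, rfl⟩ := h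
        simp [FreeLieAlgebra.lift_of_apply, smul_lie]
      · obtain ⟨c, x, y, rfl⟩ := h
        simp [FreeLieAlgebra.lift_of_apply, lie_smul]
      · obtain ⟨x, x', y, rfl⟩ := h
        simp only [map_sub, map_add, FreeLieAlgebra.lift_of_apply, lie_lie]
        abel
      · obtain ⟨x, y, y', rfl⟩ := h
        simp only [map_sub, map_add, FreeLieAlgebra.lift_of_apply, lie_lie]
        rw [leibniz_lie x y' y, ← lie_skew y ⁅x, y'⁆]
        abel
      · obtain ⟨x, y, x', y', rfl⟩ := h
        simp only [map_add, LieHom.map_lie, FreeLieAlgebra.lift_of_apply]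
        rw [← lie_skew y x]
        simp
      · obtain ⟨x, rfl⟩ := h
        simp [FreeLieAlgebra.lift_of_apply])

end extmaps

section more

variable (k : Type) [Field k]
variable (L : Type u) [LieRing L] [LieAlgebra k L]

/-- A Lie algebra is a Heisenberg algebra `H(m)` (of dimension `2m + 1`) iff its derived
subalgebra coincides with its centre and is one-dimensional, and it has dimension `2m + 1`. -/
def IsHeisenberg (m : ℕ) : Prop :=
  derived k L = LieAlgebra.center k L ∧ Module.finrank k L = 2 * m + 1 ∧
    Module.finrank k (derived k L) = 1

/-- A vector space regarded as an abelian Lie algebra. -/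
def AbelianLieOf (V : Type v) : Type v := V

instance (V : Type v) [AddCommGroup V] : AddCommGroup (AbelianLieOf V) :=
  inferInstanceAs (AddCommGroup V)

instance (V : Type v) [AddCommGroup V] [Module k V] : Module k (AbelianLieOf V) :=
  inferInstanceAs (Module k V)

instance (V : Type v) [AddCommGroup V] : LieRing (AbelianLieOf V) where
  bracket _ _ := 0
  add_lie _ _ _ := by simp
  lie_add _ _ _ := by simp
  lie_self _ := rfl
  leibniz_lie _ _ _ := by simp

instance (V : Type v) [AddCommGroup V] [Module k V] : LieAlgebra k (AbelianLieOf V) where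
  lie_smul _ _ _ := by
    show (0 : AbelianLieOf V) = _ • (0 : AbelianLieOf V)
    simp

/-- A decomposition of `L` as the direct sum of a Heisenberg algebra `H(m)` and an
abelian Lie algebra of dimension `j`. -/
structure HeisenbergAbelianDecomp (m j : ℕ) where
  H : Type u
  A : Type u
  [instHL : LieRing H]
  [instHA : LieAlgebra k H]
  [instAL : LieRing A]
  [instAA : LieAlgebra k A]
  heis : IsHeisenberg k H m
  abel : IsLieAbelian A
  dimA : Module.finrank k A = j
  equiv : Nonempty (L ≃ₗ⁅k⁆ H × A)

/-- The projection `H × A → H` as a Lie algebra morphism. -/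
def lieFst (H A : Type u) [LieRing H] [LieAlgebra k H] [LieRing A] [LieAlgebra k A] :
    H × A →ₗ⁅k⁆ H :=
  { toLinearMap := LinearMap.fst k H A
    map_lie' := rfl }

end more



/-! ### Auxiliary lemmas for the proof of `exterior_square_prod` -/

section WedgeLemmas

variable (k : Type) [Field k]
variable {L : Type u} [LieRing L] [LieAlgebra k L]

lemma wedge_add_left (x x' y : L) :
    wedge k (x + x') y = wedge k x y + wedge k x' y := by
  have h := wedge_mem_rel_zero k (M := L)
    (a := FreeLieAlgebra.of k (x + x', y) - FreeLieAlgebra.of k (x, y)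
      - FreeLieAlgebra.of k (x', y)) (Or.inl ⟨x, x', y, rfl⟩)
  simp only [map_sub] at h
  rw [sub_sub, sub_eq_zero] at h
  exact h

lemma wedge_add_right (x y y' : L) :
    wedge k x (y + y') = wedge k x y + wedge k x y' := by
  have h := wedge_mem_rel_zero k (M := L)
    (a := FreeLieAlgebra.of k (x, y + y') - FreeLieAlgebra.of k (x, y)
      - FreeLieAlgebra.of k (x, y')) (Or.inr (Or.inl ⟨x, y, y', rfl⟩))
  simp only [map_sub] at h
  rw [sub_sub, sub_eq_zero] at h
  exact h

lemma wedge_smul_left (c : k) (x y : L) :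
    wedge k (c • x) y = c • wedge k x y := by
  have h := wedge_mem_rel_zero k (M := L)
    (a := FreeLieAlgebra.of k (c • x, y) - c • FreeLieAlgebra.of k (x, y))
    (Or.inr (Or.inr (Or.inl ⟨c, x, y, rfl⟩)))
  simp only [map_sub, map_smul] at h
  rw [sub_eq_zero] at h
  exact h

lemma wedge_smul_right (c : k) (x y : L) :
    wedge k x (c • y) = c • wedge k x y := by
  have h := wedge_mem_rel_zero k (M := L)
    (a := FreeLieAlgebra.of k (x, c • y) - c • FreeLieAlgebra.of k (x, y))
    (Or.inr (Or.inr (Or.inr (Or.inl ⟨c, x, y, rfl⟩))))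
  simp only [map_sub, map_smul] at h
  rw [sub_eq_zero] at h
  exact h

lemma wedge_self (x : L) : wedge k x x = 0 :=
  wedge_mem_rel_zero k (M := L) (a := FreeLieAlgebra.of k (x, x))
    (Or.inr (Or.inr (Or.inr (Or.inr (Or.inr (Or.inr (Or.inr ⟨x, rfl⟩)))))))

lemma wedge_zero_left (y : L) : wedge k (0 : L) y = 0 := by
  have h := wedge_smul_left k 0 (0 : L) y
  simpa using h

lemma wedge_zero_right (x : L) : wedge k x (0 : L) = 0 := by
  have h := wedge_smul_right k 0 x (0 : L)
  simpa using h

lemma wedge_neg_left (x y : L) : wedge k (-x) y = - wedge k x y := by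
  have h := wedge_smul_left k (-1) x y
  simpa using h

lemma wedge_neg_right (x y : L) : wedge k x (-y) = - wedge k x y := by
  have h := wedge_smul_right k (-1) x y
  simpa using h

lemma wedge_antisymm (x y : L) : wedge k x y = - wedge k y x := by
  have h := wedge_self k (x + y)
  rw [wedge_add_left, wedge_add_right, wedge_add_right, wedge_self, wedge_self] at h
  rw [zero_add, add_zero] at h
  exact eq_neg_of_add_eq_zero_left h

lemma wedge_lie_left (x x' y : L) :
    wedge k ⁅x, x'⁆ y = wedge k x ⁅x', y⁆ - wedge k x' ⁅x, y⁆ := by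
  have h := wedge_mem_rel_zero k (M := L)
    (a := FreeLieAlgebra.of k (⁅x, x'⁆, y) - FreeLieAlgebra.of k (x, ⁅x', y⁆)
      + FreeLieAlgebra.of k (x', ⁅x, y⁆))
    (Or.inr (Or.inr (Or.inr (Or.inr (Or.inl ⟨x, x', y, rfl⟩)))))
  simp only [map_sub, map_add] at h
  rw [sub_add_eq_add_sub, sub_eq_zero] at h
  exact eq_sub_of_add_eq h

lemma wedge_lie_right (x y y' : L) :
    wedge k x ⁅y, y'⁆ = wedge k ⁅y', x⁆ y - wedge k ⁅y, x⁆ y' := by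
  have h := wedge_mem_rel_zero k (M := L)
    (a := FreeLieAlgebra.of k (x, ⁅y, y'⁆) - FreeLieAlgebra.of k (⁅y', x⁆, y)
      + FreeLieAlgebra.of k (⁅y, x⁆, y'))
    (Or.inr (Or.inr (Or.inr (Or.inr (Or.inr (Or.inl ⟨x, y, y', rfl⟩))))))
  simp only [map_sub, map_add] at h
  rw [sub_add_eq_add_sub, sub_eq_zero] at h
  exact eq_sub_of_add_eq h

lemma lie_wedge_wedge (x y x' y' : L) :
    ⁅wedge k x y, wedge k x' y'⁆ = wedge k ⁅x, y⁆ ⁅x', y'⁆ := by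
  have h := wedge_mem_rel_zero k (M := L)
    (a := ⁅FreeLieAlgebra.of k (x, y), FreeLieAlgebra.of k (x', y')⁆
      + FreeLieAlgebra.of k (⁅y, x⁆, ⁅x', y'⁆))
    (Or.inr (Or.inr (Or.inr (Or.inr (Or.inr (Or.inr (Or.inl ⟨x, y, x', y', rfl⟩)))))))
  simp only [map_add, LieHom.map_lie, ← wedge_def] at h
  have hyx : (⁅y, x⁆ : L) = -⁅x, y⁆ := by rw [← lie_skew]
  rw [hyx, wedge_neg_left] at h
  exact add_neg_eq_zero.mp h

end WedgeLemmas


section SpanAndFunctor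

variable (k : Type) [Field k]
variable {L : Type u} [LieRing L] [LieAlgebra k L]
variable {M : Type v} [LieRing M] [LieAlgebra k M]

/-- The set of wedges spans the exterior square as a `k`-module. -/
lemma mem_span_wedge (e : ExteriorSquare k L) :
    e ∈ Submodule.span k {a : ExteriorSquare k L | ∃ x y : L, a = wedge k x y} := by
  set S : Set (ExteriorSquare k L) := {a | ∃ x y : L, a = wedge k x y} with hS
  -- the span of wedges is a Lie subalgebra
  have hlie : ∀ {a b : ExteriorSquare k L}, a ∈ Submodule.span k S →
      b ∈ Submodule.span k S → ⁅a, b⁆ ∈ Submodule.span k S := by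
    intro a b ha hb
    induction ha using Submodule.span_induction with
    | mem a haS =>
      induction hb using Submodule.span_induction with
      | mem b hbS =>
        obtain ⟨x, y, rfl⟩ := haS
        obtain ⟨x', y', rfl⟩ := hbS
        rw [lie_wedge_wedge]
        exact Submodule.subset_span ⟨_, _, rfl⟩
      | zero => rw [lie_zero]; exact Submodule.zero_mem _
      | add b c _ _ hb hc => rw [lie_add]; exact Submodule.add_mem _ hb hc
      | smul c b _ hb => rw [lie_smul]; exact Submodule.smul_mem _ _ hb
    | zero => rw [zero_lie]; exact Submodule.zero_mem _
    | add a c _ _ ha hc => rw [add_lie]; exact Submodule.add_mem _ ha hc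
    | smul c a _ ha => rw [smul_lie]; exact Submodule.smul_mem _ _ ha
  let W : LieSubalgebra k (ExteriorSquare k L) :=
    { Submodule.span k S with
      lie_mem' := fun ha hb => hlie ha hb }
  have hW : ∀ x : ExteriorSquare k L, x ∈ W ↔ x ∈ Submodule.span k S := fun _ => Iff.rfl
  obtain ⟨a, rfl⟩ := LieSubmodule.Quotient.surjective_mk' (N := exteriorIdeal k L) e
  let g : FreeLieAlgebra k (L × L) →ₗ⁅k⁆ W :=
    FreeLieAlgebra.lift k fun p =>
      (⟨wedge k p.1 p.2, Submodule.subset_span ⟨p.1, p.2, rfl⟩⟩ : W)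
  have hcomp : W.incl.comp g = lieQuotMk k _ (exteriorIdeal k L) := by
    apply FreeLieAlgebra.hom_ext
    intro p
    rw [LieHom.comp_apply]
    show (g (FreeLieAlgebra.of k p) : ExteriorSquare k L) = _
    rw [FreeLieAlgebra.lift_of_apply]
    rfl
  have key : LieSubmodule.Quotient.mk' (exteriorIdeal k L) a = W.incl (g a) := by
    have h2 := congrArg (fun F : FreeLieAlgebra k (L × L) →ₗ⁅k⁆ ExteriorSquare k L => F a) hcomp
    exact h2.symm
  rw [key]
  exact (hW _).mp (g a).2

/-- Functoriality on the free Lie algebra level. -/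
noncomputable def extHomAux (f : L →ₗ⁅k⁆ M) :
    FreeLieAlgebra k (L × L) →ₗ⁅k⁆ ExteriorSquare k M :=
  FreeLieAlgebra.lift k fun p => wedge k (f p.1) (f p.2)

lemma extHomAux_of (f : L →ₗ⁅k⁆ M) (x y : L) :
    extHomAux k f (FreeLieAlgebra.of k (x, y)) = wedge k (f x) (f y) := by
  rw [extHomAux, FreeLieAlgebra.lift_of_apply]

lemma extHomAux_rels (f : L →ₗ⁅k⁆ M) : exteriorIdeal k L ≤ (extHomAux k f).ker := by
  rw [exteriorIdeal, LieSubmodule.lieSpan_le]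
  intro a ha
  rw [SetLike.mem_coe, LieHom.mem_ker]
  obtain h|h|h|h|h|h|h|h := ha
  · obtain ⟨x, x', y, rfl⟩ := h
    simp only [map_sub, extHomAux_of, map_add, wedge_add_left]
    abel
  · obtain ⟨x, y, y', rfl⟩ := h
    simp only [map_sub, extHomAux_of, map_add, wedge_add_right]
    abel
  · obtain ⟨c, x, y, rfl⟩ := h
    simp only [map_sub, map_smul, extHomAux_of, f.map_smul, wedge_smul_left]
    abel
  · obtain ⟨c, x, y, rfl⟩ := h
    simp only [map_sub, map_smul, extHomAux_of, f.map_smul, wedge_smul_right]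
    abel
  · obtain ⟨x, x', y, rfl⟩ := h
    simp only [map_sub, map_add, extHomAux_of, f.map_lie, wedge_lie_left]
    abel
  · obtain ⟨x, y, y', rfl⟩ := h
    simp only [map_sub, map_add, extHomAux_of, f.map_lie, wedge_lie_right]
    abel
  · obtain ⟨x, y, x', y', rfl⟩ := h
    simp only [map_add, LieHom.map_lie, extHomAux_of, f.map_lie, lie_wedge_wedge]
    have hyx : (⁅f y, f x⁆ : M) = -⁅f x, f y⁆ := by rw [← lie_skew]
    rw [hyx, wedge_neg_left]
    abel
  · obtain ⟨x, rfl⟩ := h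
    rw [extHomAux_of, wedge_self]

/-- The natural map `L ∧ L → M ∧ M` induced by a morphism `f : L → M`. -/
noncomputable def extHom (f : L →ₗ⁅k⁆ M) : ExteriorSquare k L →ₗ⁅k⁆ ExteriorSquare k M :=
  lieQuotLift (exteriorIdeal k L) (extHomAux k f) (extHomAux_rels k f)

lemma extHom_wedge (f : L →ₗ⁅k⁆ M) (x y : L) :
    extHom k f (wedge k x y) = wedge k (f x) (f y) := by
  rw [wedge_def]
  show extHomAux k f (FreeLieAlgebra.of k (x, y)) = _
  exact extHomAux_of k f x y

end SpanAndFunctor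

section ProdHoms

variable (k : Type) [Field k]
variable {A : Type u} {B : Type u} {M : Type v}
variable [LieRing A] [LieAlgebra k A] [LieRing B] [LieAlgebra k B]
variable [LieRing M] [LieAlgebra k M]

/-- Pairing of Lie algebra morphisms into a product. -/
def prodLieHom (f : M →ₗ⁅k⁆ A) (g : M →ₗ⁅k⁆ B) : M →ₗ⁅k⁆ A × B :=
  { toLinearMap := f.toLinearMap.prod g.toLinearMap
    map_lie' := by intro x y; exact Prod.ext (f.map_lie x y) (g.map_lie x y) }

@[simp] lemma prodLieHom_apply (f : M →ₗ⁅k⁆ A) (g : M →ₗ⁅k⁆ B) (x : M) :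
    prodLieHom k f g x = (f x, g x) := rfl

/-- The inclusion `A → A × B` as a Lie algebra morphism. -/
def lieInl : A →ₗ⁅k⁆ A × B :=
  { toLinearMap := LinearMap.inl k A B
    map_lie' := by intro x y; exact Prod.ext rfl (zero_lie (0 : B)).symm }

/-- The inclusion `B → A × B` as a Lie algebra morphism. -/
def lieInr : B →ₗ⁅k⁆ A × B :=
  { toLinearMap := LinearMap.inr k A B
    map_lie' := by intro x y; exact Prod.ext (zero_lie (0 : A)).symm rfl }

/-- The projection `A × B → B` as a Lie algebra morphism. -/
def lieSnd : A × B →ₗ⁅k⁆ B :=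
  { toLinearMap := LinearMap.snd k A B
    map_lie' := rfl }

@[simp] lemma lieInl_apply (x : A) : (lieInl k : A →ₗ⁅k⁆ A × B) x = (x, 0) := rfl
@[simp] lemma lieInr_apply (x : B) : (lieInr k : B →ₗ⁅k⁆ A × B) x = (0, x) := rfl
@[simp] lemma lieSnd_apply (x : A × B) : (lieSnd k : A × B →ₗ⁅k⁆ B) x = x.2 := rfl

end ProdHoms


section Derived

variable (k : Type) [Field k]
variable (L : Type u) [LieRing L] [LieAlgebra k L]

@[simp] lemma lieQuotMk_derived_lie (a b : L) :
    lieQuotMk k L (derived k L) ⁅a, b⁆ = 0 := by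
  show ((derived k L : Submodule k L)).mkQ ⁅a, b⁆ = 0
  rw [Submodule.mkQ_apply, Submodule.Quotient.mk_eq_zero]
  exact LieSubmodule.lie_mem_lie (LieSubmodule.mem_top a) (LieSubmodule.mem_top b)

@[simp] lemma lie_quot_derived (a b : L ⧸ derived k L) : ⁅a, b⁆ = 0 := by
  obtain ⟨x, rfl⟩ := LieSubmodule.Quotient.surjective_mk' (N := derived k L) a
  obtain ⟨y, rfl⟩ := LieSubmodule.Quotient.surjective_mk' (N := derived k L) b
  have h : ⁅lieQuotMk k L (derived k L) x, lieQuotMk k L (derived k L) y⁆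
      = lieQuotMk k L (derived k L) ⁅x, y⁆ := ((lieQuotMk k L (derived k L)).map_lie x y).symm
  exact h.trans (lieQuotMk_derived_lie k L x y)

end Derived


section AbelNorm

variable {V : Type v} [AddCommGroup V]

lemma abelOf_add (a b : V) :
    @HAdd.hAdd (AbelianLieOf V) (AbelianLieOf V) (AbelianLieOf V) _ a b = ((a + b : V)) := rfl

lemma abelOf_sub (a b : V) :
    @HSub.hSub (AbelianLieOf V) (AbelianLieOf V) (AbelianLieOf V) _ a b = ((a - b : V)) := rfl

lemma abelOf_neg (a : V) : @Neg.neg (AbelianLieOf V) _ a = ((-a : V)) := rfl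

lemma abelOf_zero : (0 : AbelianLieOf V) = ((0 : V)) := rfl

lemma abelOf_smul {k : Type} [Field k] [Module k V] (c : k) (a : V) :
    @HSMul.hSMul k (AbelianLieOf V) (AbelianLieOf V) _ c a = ((c • a : V)) := rfl

omit [AddCommGroup V] in
lemma abelOf_eq (a b : V) :
    (@Eq (AbelianLieOf V) a b) ↔ ((a : V) = b) := Iff.rfl

end AbelNorm

section ThirdComponent

variable (k : Type) [Field k]
variable (L₁ L₂ : Type u) [LieRing L₁] [LieAlgebra k L₁] [LieRing L₂] [LieAlgebra k L₂]

@[simp] lemma prod_lie_fst (x y : L₁ × L₂) : (⁅x, y⁆ : L₁ × L₂).1 = ⁅x.1, y.1⁆ := rfl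
@[simp] lemma prod_lie_snd (x y : L₁ × L₂) : (⁅x, y⁆ : L₁ × L₂).2 = ⁅x.2, y.2⁆ := rfl

@[simp] lemma abelianLie_bracket {V : Type v} [AddCommGroup V] (u v : AbelianLieOf V) :
    ⁅u, v⁆ = 0 := rfl

/-- The underlying map of the third component. -/
noncomputable def tfun (x y : L₁ × L₂) :
    AbelianLieOf (TensorProduct k (L₁ ⧸ derived k L₁) (L₂ ⧸ derived k L₂)) :=
  (lieQuotMk k L₁ (derived k L₁) x.1) ⊗ₜ[k] (lieQuotMk k L₂ (derived k L₂) y.2)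
    - (lieQuotMk k L₁ (derived k L₁) y.1) ⊗ₜ[k] (lieQuotMk k L₂ (derived k L₂) x.2)

/-- The third component on the free Lie algebra. -/
noncomputable def phiCAux : FreeLieAlgebra k ((L₁ × L₂) × (L₁ × L₂)) →ₗ⁅k⁆
    AbelianLieOf (TensorProduct k (L₁ ⧸ derived k L₁) (L₂ ⧸ derived k L₂)) :=
  FreeLieAlgebra.lift k fun p => tfun k L₁ L₂ p.1 p.2

lemma phiCAux_of (x y : L₁ × L₂) :
    phiCAux k L₁ L₂ (FreeLieAlgebra.of k (x, y)) = tfun k L₁ L₂ x y := by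
  rw [phiCAux, FreeLieAlgebra.lift_of_apply]

lemma phiCAux_rels : exteriorIdeal k (L₁ × L₂) ≤ (phiCAux k L₁ L₂).ker := by
  rw [exteriorIdeal, LieSubmodule.lieSpan_le]
  intro a ha
  rw [SetLike.mem_coe, LieHom.mem_ker]
  obtain h|h|h|h|h|h|h|h := ha
  · obtain ⟨x, x', y, rfl⟩ := h
    simp only [map_sub, phiCAux_of, tfun, Prod.fst_add, Prod.snd_add,
      map_add, TensorProduct.add_tmul, TensorProduct.tmul_add,
      abelOf_add, abelOf_sub, abelOf_neg, abelOf_zero, abelOf_smul, abelOf_eq]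
    abel
  · obtain ⟨x, y, y', rfl⟩ := h
    simp only [map_sub, phiCAux_of, tfun, Prod.fst_add, Prod.snd_add,
      map_add, TensorProduct.add_tmul, TensorProduct.tmul_add,
      abelOf_add, abelOf_sub, abelOf_neg, abelOf_zero, abelOf_smul, abelOf_eq]
    abel
  · obtain ⟨c, x, y, rfl⟩ := h
    simp only [map_sub, map_smul, phiCAux_of, tfun, Prod.smul_fst,
      Prod.smul_snd, ← TensorProduct.smul_tmul', TensorProduct.tmul_smul, smul_sub,
      abelOf_add, abelOf_sub, abelOf_neg, abelOf_zero, abelOf_smul, abelOf_eq]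
    abel
  · obtain ⟨c, x, y, rfl⟩ := h
    simp only [map_sub, map_smul, phiCAux_of, tfun, Prod.smul_fst,
      Prod.smul_snd, ← TensorProduct.smul_tmul', TensorProduct.tmul_smul, smul_sub,
      abelOf_add, abelOf_sub, abelOf_neg, abelOf_zero, abelOf_smul, abelOf_eq]
    abel
  · obtain ⟨x, x', y, rfl⟩ := h
    simp only [map_sub, map_add, phiCAux_of, tfun, prod_lie_fst,
      prod_lie_snd, lieQuotMk_derived_lie, TensorProduct.zero_tmul,
      TensorProduct.tmul_zero, abelOf_add, abelOf_sub, abelOf_neg, abelOf_zero,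
      abelOf_smul, abelOf_eq]
    abel
  · obtain ⟨x, y, y', rfl⟩ := h
    simp only [map_sub, map_add, phiCAux_of, tfun, prod_lie_fst,
      prod_lie_snd, lieQuotMk_derived_lie, TensorProduct.zero_tmul,
      TensorProduct.tmul_zero, abelOf_add, abelOf_sub, abelOf_neg, abelOf_zero,
      abelOf_smul, abelOf_eq]
    abel
  · obtain ⟨x, y, x', y', rfl⟩ := h
    simp only [map_add, LieHom.map_lie, phiCAux_of, tfun, prod_lie_fst,
      prod_lie_snd, lieQuotMk_derived_lie, TensorProduct.zero_tmul,
      TensorProduct.tmul_zero, abelianLie_bracket, lie_quot_derived, abelOf_add,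
      abelOf_sub, abelOf_neg, abelOf_zero, abelOf_smul, abelOf_eq, add_zero, zero_add]
    abel
  · obtain ⟨x, rfl⟩ := h
    rw [phiCAux_of, tfun, sub_self]
    rfl

/-- The third component `L ∧ L → L₁/L₁² ⊗ L₂/L₂²` (as abelian Lie algebra). -/
noncomputable def phiC : ExteriorSquare k (L₁ × L₂) →ₗ⁅k⁆
    AbelianLieOf (TensorProduct k (L₁ ⧸ derived k L₁) (L₂ ⧸ derived k L₂)) :=
  lieQuotLift (exteriorIdeal k (L₁ × L₂)) (phiCAux k L₁ L₂) (phiCAux_rels k L₁ L₂)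

lemma phiC_wedge (x y : L₁ × L₂) :
    phiC k L₁ L₂ (wedge k x y) = tfun k L₁ L₂ x y := by
  rw [wedge_def]
  show phiCAux k L₁ L₂ (FreeLieAlgebra.of k (x, y)) = _
  exact phiCAux_of k L₁ L₂ x y

/-- The bilinear map `L₁ → L₂ → (L₁ × L₂) ∧ (L₁ × L₂)`, `(a, b) ↦ (a,0) ∧ (0,b)`. -/
noncomputable def Bmap : L₁ →ₗ[k] L₂ →ₗ[k] ExteriorSquare k (L₁ × L₂) :=
  LinearMap.mk₂ k (fun a b => wedge k ((a, 0) : L₁ × L₂) ((0, b) : L₁ × L₂))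
    (fun a a' b => by
      rw [show ((a + a', 0) : L₁ × L₂) = (a, 0) + (a', 0) by simp, wedge_add_left])
    (fun c a b => by
      rw [show ((c • a, 0) : L₁ × L₂) = c • ((a, 0) : L₁ × L₂) by simp, wedge_smul_left])
    (fun a b b' => by
      rw [show ((0, b + b') : L₁ × L₂) = (0, b) + (0, b') by simp, wedge_add_right])
    (fun c a b => by
      rw [show ((0, c • b) : L₁ × L₂) = c • ((0, b) : L₁ × L₂) by simp, wedge_smul_right])

@[simp] lemma Bmap_apply (a : L₁) (b : L₂) :
    Bmap k L₁ L₂ a b = wedge k ((a, 0) : L₁ × L₂) ((0, b) : L₁ × L₂) := rfl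

lemma Bmap_left_derived {a : L₁} (ha : a ∈ derived k L₁) (b : L₂) :
    Bmap k L₁ L₂ a b = 0 := by
  rw [derived, ← LieSubmodule.mem_toSubmodule, LieSubmodule.lieIdeal_oper_eq_linear_span']
    at ha
  induction ha using Submodule.span_induction with
  | mem x hx =>
    obtain ⟨u, -, v, -, rfl⟩ := hx
    rw [Bmap_apply, show ((⁅u, v⁆, 0) : L₁ × L₂) = ⁅((u, 0) : L₁ × L₂), ((v, 0) : L₁ × L₂)⁆
        from Prod.ext rfl (zero_lie (0 : L₂)).symm,
      wedge_lie_left,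
      show (⁅((v, 0) : L₁ × L₂), ((0, b) : L₁ × L₂)⁆ : L₁ × L₂) = 0
        from Prod.ext (lie_zero v) (zero_lie b),
      show (⁅((u, 0) : L₁ × L₂), ((0, b) : L₁ × L₂)⁆ : L₁ × L₂) = 0
        from Prod.ext (lie_zero u) (zero_lie b),
      wedge_zero_right, wedge_zero_right, sub_zero]
  | zero => simp [wedge_zero_left, wedge_zero_right]
  | add x y _ _ hx hy => rw [map_add, LinearMap.add_apply, hx, hy, add_zero]
  | smul c x _ hx => rw [map_smul, LinearMap.smul_apply, hx, smul_zero]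

lemma Bmap_right_derived (a : L₁) {b : L₂} (hb : b ∈ derived k L₂) :
    Bmap k L₁ L₂ a b = 0 := by
  rw [derived, ← LieSubmodule.mem_toSubmodule, LieSubmodule.lieIdeal_oper_eq_linear_span']
    at hb
  induction hb using Submodule.span_induction with
  | mem x hx =>
    obtain ⟨u, -, v, -, rfl⟩ := hx
    rw [Bmap_apply, show ((0, ⁅u, v⁆) : L₁ × L₂) = ⁅((0, u) : L₁ × L₂), ((0, v) : L₁ × L₂)⁆
        from Prod.ext (zero_lie (0 : L₁)).symm rfl,
      wedge_lie_right,
      show (⁅((0, v) : L₁ × L₂), ((a, 0) : L₁ × L₂)⁆ : L₁ × L₂) = 0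
        from Prod.ext (zero_lie a) (lie_zero v),
      show (⁅((0, u) : L₁ × L₂), ((a, 0) : L₁ × L₂)⁆ : L₁ × L₂) = 0
        from Prod.ext (zero_lie a) (lie_zero u),
      wedge_zero_left, wedge_zero_left, sub_zero]
  | zero => exact wedge_zero_right k _
  | add x y _ _ hx hy => rw [map_add, hx, hy, add_zero]
  | smul c x _ hx => rw [map_smul, hx, smul_zero]

/-- `Bmap` with the second factor descended to the abelianization. -/
noncomputable def BmapQR : L₁ →ₗ[k] (L₂ ⧸ derived k L₂) →ₗ[k] ExteriorSquare k (L₁ × L₂) where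
  toFun a := Submodule.liftQ _ (Bmap k L₁ L₂ a)
    (fun b hb => Bmap_right_derived k L₁ L₂ a hb)
  map_add' a a' := by
    apply Submodule.linearMap_qext
    ext b
    simp
    rfl
  map_smul' c a := by
    apply Submodule.linearMap_qext
    ext b
    simp
    rfl

/-- `Bmap` descended to both abelianizations. -/
noncomputable def BmapQ :
    (L₁ ⧸ derived k L₁) →ₗ[k] (L₂ ⧸ derived k L₂) →ₗ[k] ExteriorSquare k (L₁ × L₂) :=
  Submodule.liftQ _ (BmapQR k L₁ L₂) (fun a ha => by
    apply Submodule.linearMap_qext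
    ext b
    show Bmap k L₁ L₂ a b = 0
    exact Bmap_left_derived k L₁ L₂ ha b)

lemma BmapQ_apply (a : L₁) (b : L₂) :
    BmapQ k L₁ L₂ (lieQuotMk k L₁ (derived k L₁) a) (lieQuotMk k L₂ (derived k L₂) b)
      = wedge k ((a, 0) : L₁ × L₂) ((0, b) : L₁ × L₂) := rfl

end ThirdComponent

section BigMaps

variable (k : Type) [Field k]
variable (L₁ L₂ : Type u) [LieRing L₁] [LieAlgebra k L₁] [LieRing L₂] [LieAlgebra k L₂]

/-- The forward map of the isomorphism. -/
noncomputable def bigPhi : ExteriorSquare k (L₁ × L₂) →ₗ⁅k⁆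
    (ExteriorSquare k L₁ × ExteriorSquare k L₂ ×
      AbelianLieOf (TensorProduct k (L₁ ⧸ derived k L₁) (L₂ ⧸ derived k L₂))) :=
  prodLieHom k (extHom k (lieFst k L₁ L₂))
    (prodLieHom k (extHom k (lieSnd k)) (phiC k L₁ L₂))

lemma bigPhi_wedge (x y : L₁ × L₂) :
    bigPhi k L₁ L₂ (wedge k x y) =
      (wedge k x.1 y.1, wedge k x.2 y.2, tfun k L₁ L₂ x y) := by
  rw [bigPhi, prodLieHom_apply, prodLieHom_apply, extHom_wedge, extHom_wedge,
    phiC_wedge]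
  rfl

/-- The backward map of the isomorphism (a linear map). -/
noncomputable def bigPsi :
    (ExteriorSquare k L₁ × ExteriorSquare k L₂ ×
      AbelianLieOf (TensorProduct k (L₁ ⧸ derived k L₁) (L₂ ⧸ derived k L₂)))
      →ₗ[k] ExteriorSquare k (L₁ × L₂) where
  toFun p := extHom k (lieInl k) p.1 + extHom k (lieInr k) p.2.1
    + TensorProduct.lift (BmapQ k L₁ L₂) p.2.2
  map_add' p q := by
    simp only [Prod.fst_add, Prod.snd_add, map_add, abelOf_add, map_add]
    rw [show TensorProduct.lift (BmapQ k L₁ L₂) (p.2.2 + q.2.2) = TensorProduct.lift (BmapQ k L₁ L₂) p.2.2 + TensorProduct.lift (BmapQ k L₁ L₂) q.2.2 from map_add _ _ _]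
    abel
  map_smul' c p := by
    simp only [Prod.smul_fst, Prod.smul_snd, map_smul, abelOf_smul, map_smul,
      RingHom.id_apply]
    rw [smul_add, smul_add]
    rw [show TensorProduct.lift (BmapQ k L₁ L₂) (c • p.2.2) = c • TensorProduct.lift (BmapQ k L₁ L₂) p.2.2 from map_smul _ _ _]

@[simp] lemma bigPsi_apply (p) : bigPsi k L₁ L₂ p
    = extHom k (lieInl k) p.1 + extHom k (lieInr k) p.2.1
      + TensorProduct.lift (BmapQ k L₁ L₂) p.2.2 := rfl

end BigMaps

/-- `(L₁ ⊕ L₂) ∧ (L₁ ⊕ L₂) ≅ (L₁ ∧ L₁) ⊕ (L₂ ∧ L₂) ⊕ (L₁/L₁² ⊗ L₂/L₂²)`,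
the last factor being regarded as an abelian Lie algebra. -/
theorem exterior_square_prod (k : Type) [Field k] (L₁ L₂ : Type u) [LieRing L₁]
    [LieAlgebra k L₁] [LieRing L₂] [LieAlgebra k L₂] [Module.Finite k L₁]
    [Module.Finite k L₂] :
    Nonempty ((ExteriorSquare k (L₁ × L₂)) ≃ₗ⁅k⁆
      (ExteriorSquare k L₁ × ExteriorSquare k L₂ ×
        AbelianLieOf (TensorProduct k (L₁ ⧸ derived k L₁) (L₂ ⧸ derived k L₂)))) := by
  refine ⟨{ toLieHom := bigPhi k L₁ L₂
            invFun := bigPsi k L₁ L₂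
            left_inv := ?_
            right_inv := ?_ }⟩
  · -- left inverse
    intro e
    show bigPsi k L₁ L₂ (bigPhi k L₁ L₂ e) = e
    have he := mem_span_wedge k e
    induction he using Submodule.span_induction with
    | mem a ha =>
      obtain ⟨x, y, rfl⟩ := ha
      rw [bigPhi_wedge, bigPsi_apply]
      dsimp only
      rw [extHom_wedge, extHom_wedge]
      simp only [lieInl_apply, lieInr_apply]
      have hlift : TensorProduct.lift (BmapQ k L₁ L₂) (tfun k L₁ L₂ x y)
          = wedge k ((x.1, 0) : L₁ × L₂) ((0, y.2) : L₁ × L₂)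
            - wedge k ((y.1, 0) : L₁ × L₂) ((0, x.2) : L₁ × L₂) := by
        simp only [tfun, abelOf_sub, map_sub, TensorProduct.lift.tmul, BmapQ_apply]
      rw [hlift]
      have hx : x = ((x.1, 0) : L₁ × L₂) + ((0, x.2) : L₁ × L₂) := by
        ext <;> simp
      have hy : y = ((y.1, 0) : L₁ × L₂) + ((0, y.2) : L₁ × L₂) := by
        ext <;> simp
      conv_rhs => rw [hx, hy]
      rw [wedge_add_left, wedge_add_right, wedge_add_right,
        wedge_antisymm k ((0, x.2) : L₁ × L₂) ((y.1, 0) : L₁ × L₂)]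
      abel
    | zero => rw [map_zero (bigPhi k L₁ L₂), map_zero (bigPsi k L₁ L₂)]
    | add a b _ _ ha hb =>
      rw [map_add (bigPhi k L₁ L₂), map_add (bigPsi k L₁ L₂), ha, hb]
    | smul c a _ ha =>
      rw [map_smul (bigPhi k L₁ L₂), map_smul (bigPsi k L₁ L₂), ha]
  · -- right inverse
    intro p
    show bigPhi k L₁ L₂ (bigPsi k L₁ L₂ p) = p
    have h1 : ∀ a : ExteriorSquare k L₁,
        bigPhi k L₁ L₂ (extHom k (lieInl k) a) = (a, 0, 0) := by
      intro a
      have ha := mem_span_wedge k a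
      induction ha using Submodule.span_induction with
      | mem a ha =>
        obtain ⟨u, v, rfl⟩ := ha
        rw [extHom_wedge, lieInl_apply, lieInl_apply, bigPhi_wedge]
        dsimp only
        refine Prod.ext rfl (Prod.ext ?_ ?_)
        · exact wedge_zero_left k (0 : L₂)
        · show tfun k L₁ L₂ (u, 0) (v, 0) = 0
          simp only [tfun, abelOf_sub, abelOf_zero, map_zero,
            TensorProduct.tmul_zero, sub_zero]
          rfl
      | zero =>
        rw [map_zero, map_zero]
        rfl
      | add a b _ _ ha hb =>
        rw [map_add, map_add, ha, hb]
        refine Prod.ext (by simp) (Prod.ext (by simp [abelOf_add]) ?_)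
        show (0 : AbelianLieOf _) + 0 = 0
        exact add_zero _
      | smul c a _ ha =>
        rw [map_smul, map_smul, ha]
        refine Prod.ext (by simp) (Prod.ext (by simp) ?_)
        show c • (0 : AbelianLieOf _) = 0
        exact smul_zero _
    have h2 : ∀ b : ExteriorSquare k L₂,
        bigPhi k L₁ L₂ (extHom k (lieInr k) b) = (0, b, 0) := by
      intro b
      have hb := mem_span_wedge k b
      induction hb using Submodule.span_induction with
      | mem b hb =>
        obtain ⟨u, v, rfl⟩ := hb
        rw [extHom_wedge, lieInr_apply, lieInr_apply, bigPhi_wedge]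
        dsimp only
        refine Prod.ext (wedge_zero_left k (0 : L₁)) (Prod.ext rfl ?_)
        show tfun k L₁ L₂ (0, u) (0, v) = 0
        simp only [tfun, abelOf_sub, abelOf_zero, map_zero,
          TensorProduct.zero_tmul, sub_zero]
        rfl
      | zero =>
        rw [map_zero, map_zero]
        rfl
      | add a b _ _ ha hb =>
        rw [map_add, map_add, ha, hb]
        refine Prod.ext (by simp) (Prod.ext (by simp) ?_)
        show (0 : AbelianLieOf _) + 0 = 0
        exact add_zero _
      | smul c a _ ha =>
        rw [map_smul, map_smul, ha]
        refine Prod.ext (by simp) (Prod.ext (by simp) ?_)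
        show c • (0 : AbelianLieOf _) = 0
        exact smul_zero _
    have h3 : ∀ c : AbelianLieOf (TensorProduct k (L₁ ⧸ derived k L₁) (L₂ ⧸ derived k L₂)),
        bigPhi k L₁ L₂ (TensorProduct.lift (BmapQ k L₁ L₂) c) = (0, 0, c) := by
      intro c
      induction c using TensorProduct.induction_on with
      | zero =>
        rw [map_zero, map_zero]
        rfl
      | tmul xq yq =>
        obtain ⟨u, rfl⟩ := LieSubmodule.Quotient.surjective_mk' (N := derived k L₁) xq
        obtain ⟨v, rfl⟩ := LieSubmodule.Quotient.surjective_mk' (N := derived k L₂) yq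
        rw [show TensorProduct.lift (BmapQ k L₁ L₂)
              (LieSubmodule.Quotient.mk' (derived k L₁) u ⊗ₜ[k]
                LieSubmodule.Quotient.mk' (derived k L₂) v)
            = wedge k ((u, 0) : L₁ × L₂) ((0, v) : L₁ × L₂) from rfl,
          bigPhi_wedge]
        dsimp only
        refine Prod.ext (wedge_zero_right k ((u : L₁))) (Prod.ext (wedge_zero_left k v) ?_)
        show tfun k L₁ L₂ (u, 0) (0, v) = _
        simp only [tfun, abelOf_sub, map_zero, TensorProduct.tmul_zero,
          TensorProduct.zero_tmul, sub_zero]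
        rfl
      | add c d hc hd =>
        rw [map_add, map_add, hc, hd]
        refine Prod.ext (by simp) (Prod.ext (by simp) rfl)
    rw [bigPsi_apply, map_add, map_add, h1, h2, h3]
    refine Prod.ext (by simp) (Prod.ext (by simp) ?_)
    show ((0 : AbelianLieOf _) + 0) + p.2.2 = p.2.2
    refine (congrArg (· + p.2.2) (add_zero _)).trans ?_
    show (0 : AbelianLieOf _) + p.2.2 = p.2.2
    exact zero_add _
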